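/- Let Q be a probability distribution on ℝ with finite second moment, τ ∈ (0,1), and let t* be the τ-expectile of Q. For all t ≥ t*, the excess inner risk satisfies C_{L_τ,Q}(t) - C_{L_τ,Q}(t*) = (t*-t)²[(1-τ)Q((-∞,t*)) + τQ([t,∞))] + τ ∫_{t* ≤ y < t} (y-t*)(2t-t*-y) dQ(y) + (1-τ) ∫_{t* ≤ y < t} (y-t)² dQ(y). -/

import Mathlib

open MeasureTheory

noncomputable def alsLoss (τ y t : ℝ) : ℝ :=
  if y < t then (1 - τ) * (y - t) ^ 2 else τ * (y - t) ^ 2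

theorem excess_inner_risk_eq (Q : Measure ℝ) [IsProbabilityMeasure Q]
    (hQ2 : Integrable (fun y : ℝ => y ^ 2) Q)
    (τ : ℝ) (hτ : τ ∈ Set.Ioo (0 : ℝ) 1) (tstar : ℝ)
    (hfoc : τ * ∫ y in Set.Ici tstar, (y - tstar) ∂Q
      = (1 - τ) * ∫ y in Set.Iio tstar, (tstar - y) ∂Q) :
    ∀ t : ℝ, tstar ≤ t →
      (∫ y, alsLoss τ y t ∂Q) - (∫ y, alsLoss τ y tstar ∂Q)
        = (tstar - t) ^ 2 * ((1 - τ) * (Q (Set.Iio tstar)).toReal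
            + τ * (Q (Set.Ici t)).toReal)
          + τ * (∫ y in Set.Ico tstar t, (y - tstar) * (2 * t - tstar - y) ∂Q)
          + (1 - τ) * (∫ y in Set.Ico tstar t, (y - t) ^ 2 ∂Q) := by
  obtain ⟨hτ0, hτ1⟩ := hτ
  intro t ht
  -- basic integrability
  have hy1 : Integrable (fun y : ℝ => y) Q := by
    refine ((integrable_const (1:ℝ)).add hQ2).mono'
      measurable_id.aestronglyMeasurable ?_
    filter_upwards with y
    simp only [Pi.add_apply, Real.norm_eq_abs]
    nlinarith [sq_nonneg (|y| - 1), abs_nonneg y, sq_abs y]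
  have hpoly : ∀ a b c : ℝ, Integrable (fun y : ℝ => a * y ^ 2 + b * y + c) Q :=
    fun a b c => ((hQ2.const_mul a).add (hy1.const_mul b)).add (integrable_const c)
  have hsq : ∀ s : ℝ, Integrable (fun y : ℝ => (y - s) ^ 2) Q := fun s =>
    (hpoly 1 (-2 * s) (s ^ 2)).congr (Filter.Eventually.of_forall fun y => by ring)
  have hlin : ∀ s : ℝ, Integrable (fun y : ℝ => y - s) Q := fun s =>
    hy1.sub (integrable_const s)
  have hquad : Integrable (fun y : ℝ => (y - tstar) * (2 * t - tstar - y)) Q :=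
    (hpoly (-1) (2 * t) (-(tstar * (2 * t - tstar)))).congr
      (Filter.Eventually.of_forall fun y => by ring)
  -- alsLoss integrability and splitting
  have hals : ∀ s : ℝ, Integrable (fun y => alsLoss τ y s) Q := by
    intro s
    have hmeas : Measurable (fun y => alsLoss τ y s) := by
      unfold alsLoss
      exact Measurable.ite (measurableSet_lt measurable_id measurable_const)
        (by fun_prop) (by fun_prop)
    refine (hsq s).mono' hmeas.aestronglyMeasurable ?_
    filter_upwards with y
    unfold alsLoss
    rw [Real.norm_eq_abs]
    split <;> rw [abs_of_nonneg (mul_nonneg (by linarith) (sq_nonneg _))] <;>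
      nlinarith [sq_nonneg (y - s)]
  have hsplit : ∀ s : ℝ, (∫ y, alsLoss τ y s ∂Q)
      = (1 - τ) * (∫ y in Set.Iio s, (y - s) ^ 2 ∂Q)
        + τ * (∫ y in Set.Ici s, (y - s) ^ 2 ∂Q) := by
    intro s
    rw [← intervalIntegral.integral_Iio_add_Ici (b := s) (hals s).integrableOn (hals s).integrableOn]
    congr 1
    · rw [← integral_const_mul]
      refine setIntegral_congr_fun measurableSet_Iio fun y hy => ?_
      unfold alsLoss
      rw [if_pos (show y < s from hy)]
    · rw [← integral_const_mul]
      refine setIntegral_congr_fun measurableSet_Ici fun y hy => ?_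
      unfold alsLoss
      rw [if_neg (not_lt.2 (show s ≤ y from hy))]
  -- set splits
  have hu1 : Set.Iio tstar ∪ Set.Ico tstar t = Set.Iio t := Set.Iio_union_Ico_eq_Iio ht
  have hu2 : Set.Ico tstar t ∪ Set.Ici t = Set.Ici tstar := Set.Ico_union_Ici_eq_Ici ht
  have hd1 : Disjoint (Set.Iio tstar) (Set.Ico tstar t) :=
    (Set.Iio_disjoint_Ici le_rfl).mono_right Set.Ico_subset_Ici_self
  have hd2 : Disjoint (Set.Ico tstar t) (Set.Ici t) :=
    ((Set.Iio_disjoint_Ici le_rfl).mono_left Set.Ico_subset_Iio_self)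
  have hsplitIio : (∫ y in Set.Iio t, (y - t) ^ 2 ∂Q)
      = (∫ y in Set.Iio tstar, (y - t) ^ 2 ∂Q) + (∫ y in Set.Ico tstar t, (y - t) ^ 2 ∂Q) := by
    rw [← hu1, setIntegral_union hd1 measurableSet_Ico (hsq t).integrableOn (hsq t).integrableOn]
  have hsplitIci : (∫ y in Set.Ici tstar, (y - tstar) ^ 2 ∂Q)
      = (∫ y in Set.Ico tstar t, (y - tstar) ^ 2 ∂Q) + (∫ y in Set.Ici t, (y - tstar) ^ 2 ∂Q) := by
    rw [← hu2, setIntegral_union hd2 measurableSet_Ici (hsq tstar).integrableOn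
      (hsq tstar).integrableOn]
  have hsplitI : (∫ y in Set.Ici tstar, (y - tstar) ∂Q)
      = (∫ y in Set.Ico tstar t, (y - tstar) ∂Q) + (∫ y in Set.Ici t, (y - tstar) ∂Q) := by
    rw [← hu2, setIntegral_union hd2 measurableSet_Ici (hlin tstar).integrableOn
      (hlin tstar).integrableOn]
  -- key pointwise identity integrated on a set
  have key : ∀ s : Set ℝ, MeasurableSet s →
      (∫ y in s, (y - t) ^ 2 ∂Q)
        = (∫ y in s, (y - tstar) ^ 2 ∂Q) + (tstar - t) ^ 2 * (Q s).toReal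
          + 2 * (tstar - t) * (∫ y in s, (y - tstar) ∂Q) := by
    intro s hs
    have h1 : (∫ y in s, (y - t) ^ 2 ∂Q)
        = ∫ y in s, ((y - tstar) ^ 2 + ((tstar - t) ^ 2 + 2 * (tstar - t) * (y - tstar))) ∂Q :=
      setIntegral_congr_fun hs fun y _ => by ring
    have h2 : Integrable (fun y : ℝ => (tstar - t) ^ 2 + 2 * (tstar - t) * (y - tstar)) Q :=
      (hpoly 0 (2 * (tstar - t)) ((tstar - t) ^ 2 - 2 * (tstar - t) * tstar)).congr
        (Filter.Eventually.of_forall fun y => by ring)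
    rw [h1, integral_add (hsq tstar).integrableOn h2.integrableOn,
      integral_add (integrableOn_const (C := (tstar - t) ^ 2) (measure_lt_top Q s).ne enorm_ne_top)
        (((hlin tstar).const_mul _).integrableOn),
      setIntegral_const, integral_const_mul, smul_eq_mul, Measure.real_def]
    ring
  -- identity on Ico for the quadratic cross term
  have hB : (∫ y in Set.Ico tstar t, (y - tstar) ^ 2 ∂Q)
      = -(∫ y in Set.Ico tstar t, (y - tstar) * (2 * t - tstar - y) ∂Q)
        - 2 * (tstar - t) * (∫ y in Set.Ico tstar t, (y - tstar) ∂Q) := by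
    have h1 : (∫ y in Set.Ico tstar t, (y - tstar) ^ 2 ∂Q)
        = ∫ y in Set.Ico tstar t,
            (-((y - tstar) * (2 * t - tstar - y)) - 2 * (tstar - t) * (y - tstar)) ∂Q :=
      setIntegral_congr_fun measurableSet_Ico fun y _ => by ring
    have hq2 : Integrable (fun y : ℝ => -((y - tstar) * (2 * t - tstar - y))) Q :=
      (hpoly 1 (-(2 * t)) (tstar * (2 * t - tstar))).congr
        (Filter.Eventually.of_forall fun y => by ring)
    rw [h1, integral_sub hq2.integrableOn (((hlin tstar).const_mul _).integrableOn),
      integral_const_mul]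
    congr 1
    rw [← integral_neg]
  have hneg : (∫ y in Set.Iio tstar, (tstar - y) ∂Q)
      = -(∫ y in Set.Iio tstar, (y - tstar) ∂Q) := by
    rw [← integral_neg]
    exact setIntegral_congr_fun measurableSet_Iio fun y _ => by ring
  rw [hsplit t, hsplit tstar, hsplitIio, hsplitIci,
    key (Set.Iio tstar) measurableSet_Iio, key (Set.Ici t) measurableSet_Ici, hB]
  rw [hsplitI, hneg] at hfoc
  linear_combination (2 * (tstar - t)) * hfoc
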